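/- Let φ : Γ → ℂ be a positive-definite function on a group Γ with φ(e) = 1, and let (π, H, ξ) be its GNS triple, so that ⟨π(g)ξ, π(h)ξ⟩ = φ(h⁻¹g) for all g, h ∈ Γ. Fix g ∈ Γ and suppose there is an infinite sequence (nᵢ) in Γ such that φ(nⱼ⁻¹ g nⱼ · nᵢ⁻¹ g⁻¹ nᵢ) = 0 for all i ≠ j, and φ(nᵢ⁻¹ g⁻¹ nᵢ) = φ(g⁻¹) for all i, and |φ(g⁻¹)| = |φ(g)|. Then φ(g) = 0. -/
import Mathlib


open scoped InnerProductSpace ComplexOrder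

/-- GNS vanishing. Let φ be a normalized positive-definite function on Γ
with GNS data (H, v, ξ) where v g = π(g)ξ and ⟨v g, v h⟩ = φ(h⁻¹g). If for some g
there is a sequence (nᵢ) with φ(nⱼ⁻¹ g nⱼ nᵢ⁻¹ g⁻¹ nᵢ) = 0 for i ≠ j,
φ(nᵢ⁻¹ g⁻¹ nᵢ) = φ(g⁻¹), and |φ(g⁻¹)| = |φ(g)|, then φ(g) = 0. -/
theorem stmt4 {Γ : Type*} [Group Γ] (φ : Γ → ℂ) (hφe : φ 1 = 1)
    (hpd : ∀ (m : ℕ) (gs : Fin m → Γ) (cs : Fin m → ℂ),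
      0 ≤ ∑ i, ∑ j, cs i * (starRingEnd ℂ) (cs j) * φ ((gs j)⁻¹ * gs i))
    {H : Type*} [NormedAddCommGroup H] [InnerProductSpace ℂ H]
    (v : Γ → H) (ξ : H) (hξ : ξ = v 1)
    (hGNS : ∀ g h : Γ, ⟪v h, v g⟫_ℂ = φ (h⁻¹ * g))
    (g : Γ) (n : ℕ → Γ)
    (h1 : ∀ i j : ℕ, i ≠ j →
      φ ((n j)⁻¹ * g * n j * ((n i)⁻¹ * g⁻¹ * n i)) = 0)
    (h2 : ∀ i : ℕ, φ ((n i)⁻¹ * g⁻¹ * n i) = φ g⁻¹)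
    (h3 : ‖φ g⁻¹‖ = ‖φ g‖) :
    φ g = 0 := by
  set w : ℕ → H := fun i => v ((n i)⁻¹ * g⁻¹ * n i) with hw
  have hon : Orthonormal ℂ w := by
    rw [orthonormal_iff_ite]
    intro i j
    by_cases hij : i = j
    · subst hij
      simp only [if_pos rfl, hw, hGNS]
      rw [show ((n i)⁻¹ * g⁻¹ * n i)⁻¹ * ((n i)⁻¹ * g⁻¹ * n i) = 1 by group, hφe]
      simp
    · simp only [if_neg hij, hw, hGNS]
      have := h1 j i (fun h => hij h.symm)
      rw [show ((n i)⁻¹ * g⁻¹ * n i)⁻¹ * ((n j)⁻¹ * g⁻¹ * n j)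
        = (n i)⁻¹ * g * n i * ((n j)⁻¹ * g⁻¹ * n j) by group]
      exact h1 j i (fun h => hij h.symm)
  have hnormξ : ‖ξ‖ ^ 2 = 1 := by
    have : (⟪ξ, ξ⟫_ℂ) = 1 := by rw [hξ, hGNS]; simpa using hφe
    have h' := inner_self_eq_norm_sq (𝕜 := ℂ) ξ
    rw [this] at h'
    simpa using h'.symm
  have hinner : ∀ i : ℕ, ‖⟪w i, ξ⟫_ℂ‖ = ‖φ g‖ := by
    intro i
    have : (⟪ξ, w i⟫_ℂ) = φ g⁻¹ := by
      rw [hξ, hw, hGNS, inv_one, one_mul, h2]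
    rw [← h3, ← this, ← inner_conj_symm (w i) ξ]
    exact RCLike.norm_conj _
  -- Bessel
  have hbessel : ∀ k : ℕ, (k : ℝ) * ‖φ g‖ ^ 2 ≤ 1 := by
    intro k
    have := hon.sum_inner_products_le (s := Finset.range k) ξ
    rw [hnormξ] at this
    calc (k : ℝ) * ‖φ g‖ ^ 2 = ∑ i ∈ Finset.range k, ‖⟪w i, ξ⟫_ℂ‖ ^ 2 := by
          simp [hinner, mul_comm]
      _ ≤ 1 := this
  by_contra hne
  have hpos : 0 < ‖φ g‖ ^ 2 := by
    have := norm_pos_iff.mpr hne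
    positivity
  obtain ⟨k, hk⟩ := exists_nat_gt (1 / ‖φ g‖ ^ 2)
  have := hbessel k
  rw [div_lt_iff₀ hpos] at hk
  linarith
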